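/- Let u and v be nonadjacent vertices of a graph G with γ(G_{u,v,4}) = γ(G), where G_{u,v,4} adds a path with four internal vertices between u and v. Then γ(G_{u,v,5}) = γ(G) + 1, where G_{u,v,5} adds a path with five internal vertices between u and v. -/

import Mathlib

/-- `D` is a dominating set of `G`: every vertex not in `D` has a neighbor in `D`. -/
def isDomSet {V : Type*} (G : SimpleGraph V) (D : Finset V) : Prop :=
  ∀ v, v ∉ D → ∃ u ∈ D, G.Adj u v

/-- The domination number: minimum cardinality of a dominating set. -/
noncomputable def domNum {V : Type*} (G : SimpleGraph V) : ℕ :=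
  sInf {n | ∃ D : Finset V, D.card = n ∧ isDomSet G D}

/-- The `(u,v)`-path-addition graph `G_{u,v,k}`: add an internally disjoint path with
`k` internal vertices between `u` and `v`. -/
noncomputable def pathAdd {V : Type*} (G : SimpleGraph V) (u v : V) (k : ℕ) :
    SimpleGraph (V ⊕ Fin k) :=
  SimpleGraph.fromRel (fun a b =>
    match a, b with
    | Sum.inl x, Sum.inl y => G.Adj x y
    | Sum.inl x, Sum.inr i => (x = u ∧ (i : ℕ) = 0) ∨ (x = v ∧ (i : ℕ) = k - 1)
    | Sum.inr _, Sum.inl _ => False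
    | Sum.inr i, Sum.inr j => (j : ℕ) = (i : ℕ) + 1)

lemma domSet_set_nonempty {V : Type*} [Fintype V] (G : SimpleGraph V) :
    {n | ∃ D : Finset V, D.card = n ∧ isDomSet G D}.Nonempty :=
  ⟨Finset.univ.card, Finset.univ, rfl, fun w hw => absurd (Finset.mem_univ w) hw⟩

lemma domNum_le {V : Type*} (G : SimpleGraph V) {D : Finset V} (hD : isDomSet G D) :
    domNum G ≤ D.card :=
  Nat.sInf_le ⟨D, rfl, hD⟩

lemma exists_min_domSet {V : Type*} [Fintype V] (G : SimpleGraph V) :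
    ∃ D : Finset V, D.card = domNum G ∧ isDomSet G D :=
  Nat.sInf_mem (domSet_set_nonempty G)

lemma pathAdd_adj {V : Type*} (G : SimpleGraph V) (u v : V) (k : ℕ) (a b : V ⊕ Fin k) :
    (pathAdd G u v k).Adj a b ↔ a ≠ b ∧
      ((match a, b with
        | Sum.inl x, Sum.inl y => G.Adj x y
        | Sum.inl x, Sum.inr i => (x = u ∧ (i : ℕ) = 0) ∨ (x = v ∧ (i : ℕ) = k - 1)
        | Sum.inr _, Sum.inl _ => False
        | Sum.inr i, Sum.inr j => (j : ℕ) = (i : ℕ) + 1) ∨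
       (match b, a with
        | Sum.inl x, Sum.inl y => G.Adj x y
        | Sum.inl x, Sum.inr i => (x = u ∧ (i : ℕ) = 0) ∨ (x = v ∧ (i : ℕ) = k - 1)
        | Sum.inr _, Sum.inl _ => False
        | Sum.inr i, Sum.inr j => (j : ℕ) = (i : ℕ) + 1)) := by
  rw [pathAdd, SimpleGraph.fromRel_adj]

theorem stmt19 {V : Type*} [Fintype V] (G : SimpleGraph V) (u v : V)
    (hne : u ≠ v) (h : ¬G.Adj u v)
    (h4 : domNum (pathAdd G u v 4) = domNum G) :
    domNum (pathAdd G u v 5) = domNum G + 1 := by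
  classical
  -- Upper bound
  obtain ⟨D4, hcard4, hdom4⟩ := exists_min_domSet (pathAdd G u v 4)
  set f : V ⊕ Fin 4 → V ⊕ Fin 5 :=
    Sum.map id (Fin.castLE (by norm_num)) with hf
  set D5 : Finset (V ⊕ Fin 5) := insert (Sum.inr 4) (D4.image f) with hD5
  have hdom5 : isDomSet (pathAdd G u v 5) D5 := by
    intro x hx
    match x with
    | Sum.inl y =>
      have hy : Sum.inl y ∉ D4 := by
        intro hmem
        apply hx; rw [hD5]; exact Finset.mem_insert_of_mem (Finset.mem_image.2 ⟨Sum.inl y, hmem, rfl⟩)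
      obtain ⟨d, hd, hadj⟩ := hdom4 _ hy
      rw [pathAdd_adj] at hadj
      match d with
      | Sum.inl z =>
        refine ⟨Sum.inl z, by rw [hD5]; exact Finset.mem_insert_of_mem (Finset.mem_image.2 ⟨Sum.inl z, hd, rfl⟩), ?_⟩
        rw [pathAdd_adj]
        exact ⟨by simpa using hadj.1, hadj.2⟩
      | Sum.inr i =>
        rcases hadj.2 with hfalse | hcase
        · exact absurd hfalse id
        rcases hcase with ⟨hyu, hi0⟩ | ⟨hyv, hi3⟩
        · refine ⟨Sum.inr (Fin.castLE (by norm_num) i),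
            by rw [hD5]; exact Finset.mem_insert_of_mem (Finset.mem_image.2 ⟨Sum.inr i, hd, rfl⟩), ?_⟩
          rw [pathAdd_adj]
          refine ⟨by simp, Or.inr ?_⟩
          exact Or.inl ⟨hyu, by simpa using hi0⟩
        · refine ⟨Sum.inr 4, by rw [hD5]; exact Finset.mem_insert_self _ _, ?_⟩
          rw [pathAdd_adj]
          exact ⟨by simp, Or.inr (Or.inr ⟨hyv, by decide⟩)⟩
    | Sum.inr j =>
      have hj4 : (j : ℕ) ≠ 4 := by
        intro hj
        apply hx
        have hj' : j = 4 := by apply Fin.ext; simpa using hj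
        rw [hD5, hj']
        exact Finset.mem_insert_self _ _
      have hjlt : (j : ℕ) < 4 := by omega
      set j' : Fin 4 := ⟨(j : ℕ), hjlt⟩ with hj'
      have hfj : f (Sum.inr j') = Sum.inr j := by
        simp [hf, Sum.map, Fin.ext_iff, hj']
      have hj'D : Sum.inr j' ∉ D4 := by
        intro hmem
        apply hx; rw [hD5]; exact Finset.mem_insert_of_mem (Finset.mem_image.2 ⟨Sum.inr j', hmem, hfj⟩)
      obtain ⟨d, hd, hadj⟩ := hdom4 _ hj'D
      rw [pathAdd_adj] at hadj
      match d with
      | Sum.inl z =>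
        rcases hadj.2 with hcase | hfalse
        · rcases hcase with ⟨hzu, hj0⟩ | ⟨hzv, hj3⟩
          · refine ⟨Sum.inl z, by rw [hD5]; exact Finset.mem_insert_of_mem (Finset.mem_image.2 ⟨Sum.inl z, hd, rfl⟩), ?_⟩
            rw [pathAdd_adj]
            refine ⟨by simp, Or.inl (Or.inl ⟨hzu, ?_⟩)⟩
            simpa [hj'] using hj0
          · refine ⟨Sum.inr 4, by rw [hD5]; exact Finset.mem_insert_self _ _, ?_⟩
            rw [pathAdd_adj]
            have hjv : (j : ℕ) = 3 := by simpa [hj'] using hj3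
            refine ⟨?_, Or.inr ?_⟩
            · simp only [ne_eq, Sum.inr.injEq, Fin.ext_iff]
              intro hcon
              rw [hjv] at hcon
              exact absurd hcon (by decide)
            · show ((4 : Fin 5) : ℕ) = (j : ℕ) + 1
              rw [hjv]; decide
        · exact absurd hfalse id
      | Sum.inr i =>
        have hrel : (j : ℕ) = (i : ℕ) + 1 ∨ (i : ℕ) = (j : ℕ) + 1 := by
          rcases hadj.2 with h1 | h2
          · exact Or.inl (by simpa [hj'] using h1)
          · exact Or.inr (by simpa [hj'] using h2)
        refine ⟨Sum.inr (Fin.castLE (by norm_num) i),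
          by rw [hD5]; exact Finset.mem_insert_of_mem (Finset.mem_image.2 ⟨Sum.inr i, hd, rfl⟩), ?_⟩
        rw [pathAdd_adj]
        constructor
        · simp only [ne_eq, Sum.inr.injEq, Fin.ext_iff]
          simp only [Fin.coe_castLE]
          omega
        · rcases hrel with h1 | h2
          · exact Or.inl (by simpa using h1)
          · exact Or.inr (by simpa using h2)
  have hub : domNum (pathAdd G u v 5) ≤ domNum G + 1 := by
    calc domNum (pathAdd G u v 5) ≤ D5.card := domNum_le _ hdom5
      _ ≤ (D4.image f).card + 1 := by rw [hD5]; exact Finset.card_insert_le _ _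
      _ ≤ D4.card + 1 := by
          exact Nat.add_le_add_right Finset.card_image_le 1
      _ = domNum G + 1 := by rw [hcard4, h4]
  -- Lower bound
  have key : ∀ (D : Finset (V ⊕ Fin 5)), isDomSet (pathAdd G u v 5) D →
      domNum G + 1 ≤ D.card := by
    intro D hD
    obtain ⟨m, hmD, hm1, hm3⟩ : ∃ m : Fin 5, Sum.inr m ∈ D ∧ 1 ≤ (m : ℕ) ∧ (m : ℕ) ≤ 3 := by
      by_cases h2 : Sum.inr (2 : Fin 5) ∈ D
      · exact ⟨2, h2, by norm_num, by norm_num⟩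
      · obtain ⟨d, hd, hadj⟩ := hD _ h2
        rw [pathAdd_adj] at hadj
        match d with
        | Sum.inl z =>
          exfalso
          rcases hadj.2 with hcase | hfalse
          · rcases hcase with ⟨_, h0⟩ | ⟨_, h3⟩
            · norm_num at h0
            · norm_num at h3
          · exact hfalse
        | Sum.inr i =>
          have : (2 : ℕ) = (i : ℕ) + 1 ∨ (i : ℕ) = (2 : ℕ) + 1 := by
            rcases hadj.2 with h1 | h2'
            · exact Or.inl (by simpa using h1)
            · exact Or.inr (by simpa using h2')
          exact ⟨i, hd, by omega, by omega⟩
    set g : V ⊕ Fin 5 → V := Sum.elim id (fun i => if (i : ℕ) = 4 then v else u) with hg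
    set S : Finset V := (D.erase (Sum.inr m)).image g with hS
    have hdomS : isDomSet G S := by
      intro x hx
      have hxD : Sum.inl x ∉ D := by
        intro hmem
        exact hx (Finset.mem_image.2 ⟨Sum.inl x,
          Finset.mem_erase.2 ⟨by simp, hmem⟩, rfl⟩)
      obtain ⟨d, hd, hadj⟩ := hD _ hxD
      rw [pathAdd_adj] at hadj
      match d with
      | Sum.inl z =>
        refine ⟨z, Finset.mem_image.2 ⟨Sum.inl z,
          Finset.mem_erase.2 ⟨by simp, hd⟩, rfl⟩, ?_⟩
        rcases hadj.2 with h1 | h2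
        · exact h1
        · exact h2.symm
      | Sum.inr i =>
        exfalso
        rcases hadj.2 with hfalse | hcase
        · exact hfalse
        rcases hcase with ⟨hxu, hi0⟩ | ⟨hxv, hi4⟩
        · apply hx
          refine Finset.mem_image.2 ⟨Sum.inr i, Finset.mem_erase.2 ⟨?_, hd⟩, ?_⟩
          · simp only [ne_eq, Sum.inr.injEq, Fin.ext_iff]; omega
          · simp [hg, hi0, hxu]
        · apply hx
          refine Finset.mem_image.2 ⟨Sum.inr i, Finset.mem_erase.2 ⟨?_, hd⟩, ?_⟩
          · simp only [ne_eq, Sum.inr.injEq, Fin.ext_iff]; omega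
          · simp [hg, hi4, hxv]
    have hle : domNum G ≤ S.card := domNum_le _ hdomS
    have hScard : S.card ≤ D.card - 1 := by
      calc S.card ≤ (D.erase (Sum.inr m)).card := Finset.card_image_le
        _ = D.card - 1 := Finset.card_erase_of_mem hmD
    have hpos : 1 ≤ D.card := Finset.card_pos.2 ⟨_, hmD⟩
    omega
  obtain ⟨Dmin, hcmin, hdmin⟩ := exists_min_domSet (pathAdd G u v 5)
  have hlb := key Dmin hdmin
  omega
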